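/- For every integer n ≥ 1 there exist β > 0, a constant a > 0, a dimension d, a loss function f(w; z) on ℝ^d which as a function of w is β-smooth for every data point z but is not convex, twin datasets S, S' of size n, and a data point z, such that for every T > n, coupled uniform-sampling SGD with constant step size α = a/(0.99·β) initialized at w_0 = w_0' = 0 satisfies E_A[f(w_T; z) − f(w_T'; z)] ≥ exp(a·T/2)/n²; in particular the uniform stability satisfies ε_stab ≥ exp(a·T/2)/n². -/

import Mathlib

open Finset
open scoped RealInnerProductSpace

noncomputable section

/-- SGD iterates: `sgd f α z w0 t` is the parameter after `t` steps, where `z s` is the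
data point used at step `s` and `α s` the step size of step `s` (steps are numbered from 1). -/
def sgd {d : ℕ} {Z : Type*} (f : EuclideanSpace ℝ (Fin d) → Z → ℝ) (α : ℕ → ℝ) (z : ℕ → Z)
    (w0 : EuclideanSpace ℝ (Fin d)) : ℕ → EuclideanSpace ℝ (Fin d)
  | 0 => w0
  | t + 1 => sgd f α z w0 t - α (t + 1) • gradient (fun w => f w (z (t + 1))) (sgd f α z w0 t)

/-- Divergence `Δ_t = w_t - w_t'` of coupled SGD on the datasets `S, S'` with the common
index sequence `idx` and common initialization `w0`. -/
def sgdDelta {d n : ℕ} {Z : Type*} (f : EuclideanSpace ℝ (Fin d) → Z → ℝ) (α : ℕ → ℝ)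
    (S S' : Fin n → Z) (idx : ℕ → Fin n) (w0 : EuclideanSpace ℝ (Fin d)) (t : ℕ) :
    EuclideanSpace ℝ (Fin d) :=
  sgd f α (fun s => S (idx s)) w0 t - sgd f α (fun s => S' (idx s)) w0 t

/-- Extend a finite index tuple (steps `1,…,T`) to an index sequence `ℕ → Fin n`. -/
def extSeq {n : ℕ} (hn : 0 < n) {T : ℕ} (ω : Fin T → Fin n) : ℕ → Fin n :=
  fun t => if h : 0 < t ∧ t ≤ T then ω ⟨t - 1, by omega⟩ else ⟨0, hn⟩

/-- Expectation over uniform-sampling SGD randomness: the indices `i_1,…,i_T` are i.i.d.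
uniform on `{1,…,n}` and `g` depends on the index sequence. -/
def expA {n : ℕ} (hn : 0 < n) (T : ℕ) (g : (ℕ → Fin n) → ℝ) : ℝ :=
  (∑ ω : Fin T → Fin n, g (extSeq hn ω)) / (n : ℝ) ^ T

open Classical in
/-- Conditional expectation over uniform-sampling SGD randomness given an event `E` of the
index sequence. -/
def expACond {n : ℕ} (hn : 0 < n) (T : ℕ) (g : (ℕ → Fin n) → ℝ)
    (E : (ℕ → Fin n) → Prop) : ℝ :=
  (∑ ω ∈ univ.filter (fun ω : Fin T → Fin n => E (extSeq hn ω)), g (extSeq hn ω)) /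
    ((univ.filter (fun ω : Fin T → Fin n => E (extSeq hn ω))).card : ℝ)

namespace St15

abbrev E := EuclideanSpace ℝ (Fin 1)

def e : E := EuclideanSpace.single 0 1

lemma norm_e : ‖e‖ = 1 := by simp [e]

lemma e_ne_zero : e ≠ 0 := by
  intro h
  have := norm_e
  rw [h] at this; simp at this

def myf (w : E) (z : E × ℝ) : ℝ := (if z.2 = 1 then (-(1/2)) * ‖w‖^2 else 0) + ⟪z.1, w⟫

lemma hasGradientAt_quad (v x : E) :
    HasGradientAt (fun w : E => (-(1/2)) * ‖w‖^2 + ⟪v, w⟫) (-x + v) x := by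
  have h1 : HasFDerivAt (fun w : E => ‖w‖^2) (2 • innerSL ℝ x) x :=
    (hasStrictFDerivAt_norm_sq x).hasFDerivAt
  have h2 := h1.const_mul (-(1/2) : ℝ)
  have h3 : HasFDerivAt (fun w : E => ⟪v, w⟫) (innerSL ℝ v) x := (innerSL ℝ v).hasFDerivAt
  have h4 := h2.add h3
  rw [hasGradientAt_iff_hasFDerivAt]
  have hd : InnerProductSpace.toDual ℝ E (-x + v) = -(1/2 : ℝ) • (2:ℕ) • innerSL ℝ x + innerSL ℝ v := by
    ext y
    simp [InnerProductSpace.toDual_apply_apply, inner_add_left, inner_neg_left]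
  rw [hd]
  exact h4

lemma hasGradientAt_lin (v x : E) :
    HasGradientAt (fun w : E => (0:ℝ) + ⟪v, w⟫) v x := by
  simp only [zero_add]
  rw [hasGradientAt_iff_hasFDerivAt]
  have h3 : HasFDerivAt (fun w : E => ⟪v, w⟫) (innerSL ℝ v) x := (innerSL ℝ v).hasFDerivAt
  exact h3

lemma gradient_myf (z : E × ℝ) (x : E) :
    gradient (fun w => myf w z) x = (if z.2 = 1 then -x else 0) + z.1 := by
  obtain ⟨v, c⟩ := z
  by_cases h : c = 1
  · simp only [myf, h, if_pos rfl]
    exact (hasGradientAt_quad v x).gradient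
  · simp only [myf, h, if_neg, ite_false]
    rw [(hasGradientAt_lin v x).gradient]
    simp

/-- datasets -/
def Sd (n : ℕ) (i : Fin n) : Fin n → E × ℝ := fun j => if j = i then (e, 1) else (0, 1)
def Sd' (n : ℕ) : Fin n → E × ℝ := fun _ => (0, 1)

def cnt {n : ℕ} (i : Fin n) (idx : ℕ → Fin n) : ℕ → ℝ
  | 0 => 0
  | t + 1 => 2 * cnt i idx t + (if idx (t + 1) = i then 1 else 0)

lemma sgd_Sd' {n : ℕ} (idx : ℕ → Fin n) (t : ℕ) :
    sgd myf (fun _ => (1:ℝ)) (fun s => Sd' n (idx s)) 0 t = 0 := by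
  induction t with
  | zero => rfl
  | succ t ih =>
    rw [sgd, ih, gradient_myf]
    simp [Sd']

lemma sgd_Sd {n : ℕ} (i : Fin n) (idx : ℕ → Fin n) (t : ℕ) :
    sgd myf (fun _ => (1:ℝ)) (fun s => Sd n i (idx s)) 0 t = (-(cnt i idx t)) • e := by
  induction t with
  | zero => simp [cnt, sgd]
  | succ t ih =>
    rw [sgd, ih, gradient_myf, cnt]
    by_cases h : idx (t + 1) = i
    · have hz : Sd n i (idx (t + 1)) = (e, 1) := by simp [Sd, h]
      rw [hz, if_pos rfl, if_pos h]
      match_scalars <;> ring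
    · have hz : Sd n i (idx (t + 1)) = (0, 1) := by simp [Sd, h]
      rw [hz, if_pos rfl, if_neg h]
      match_scalars <;> ring

lemma cnt_closed {n : ℕ} (i : Fin n) (idx : ℕ → Fin n) (T : ℕ) :
    cnt i idx T = ∑ t ∈ range T, (2:ℝ)^(T - 1 - t) * (if idx (t + 1) = i then 1 else 0) := by
  induction T with
  | zero => simp [cnt]
  | succ T ih =>
    rw [cnt, ih, sum_range_succ, mul_sum]
    congr 1
    · apply sum_congr rfl
      intro t ht
      rw [mem_range] at ht
      have h1 : T + 1 - 1 - t = T - t := by omega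
      have h2 : (2:ℝ) * 2 ^ (T - 1 - t) = 2 ^ (T - t) := by
        rw [← pow_succ']
        congr 1
        omega
      rw [h1, ← mul_assoc, h2]
    · simp

lemma sum_eval {n T : ℕ} (k : Fin T) (F : Fin n → ℝ) :
    ∑ ω : Fin T → Fin n, F (ω k) = (n:ℝ)^(T - 1) * ∑ x, F x := by
  classical
  rw [← Equiv.sum_comp (Equiv.funSplitAt k (Fin n)).symm (fun ω => F (ω k))]
  have key : ∀ p : Fin n × ({ j : Fin T // j ≠ k } → Fin n),
      ((Equiv.funSplitAt k (Fin n)).symm p) k = p.1 := by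
    intro p
    simp [Equiv.funSplitAt, Equiv.piSplitAt]
  have hcard : Fintype.card ({ j : Fin T // j ≠ k } → Fin n) = n ^ (T - 1) := by
    rw [Fintype.card_fun, Fintype.card_of_subtype ({k}ᶜ) (by simp), Finset.card_compl,
      Finset.card_singleton]
    simp
  simp only [key]
  rw [Fintype.sum_prod_type]
  show ∑ x : Fin n, ∑ _y : { j : Fin T // j ≠ k } → Fin n, F x = _
  simp only [Finset.sum_const, card_univ, hcard, nsmul_eq_mul]
  rw [mul_sum]
  apply sum_congr rfl
  intro x _
  push_cast
  ring

end St15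

lemma exp_bound (T : ℕ) (hT : 2 ≤ T) : Real.exp (0.99 * T / 2) ≤ 2 ^ T - 1 := by
  induction T with
  | zero => omega
  | succ T ih =>
    rcases Nat.lt_or_ge T 2 with h | h
    · have hT1 : T = 1 := by omega
      subst hT1
      have h1 : (0.99 : ℝ) * ((1 : ℕ) + 1 : ℕ) / 2 = 0.99 := by push_cast; ring
      rw [h1]
      have h2 : Real.exp 0.99 ≤ Real.exp 1 := Real.exp_le_exp.2 (by norm_num)
      have h3 := Real.exp_one_lt_d9
      norm_num
      linarith
    · have ih' := ih h
      have h495 : Real.exp (0.99 * ((T : ℕ) + 1 : ℕ) / 2) =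
          Real.exp (0.99 * T / 2) * Real.exp 0.495 := by
        rw [← Real.exp_add]; push_cast; ring_nf
      have he : Real.exp 0.495 ≤ 2 := by
        have h1 : Real.exp 0.495 * Real.exp 0.495 = Real.exp 0.99 := by
          rw [← Real.exp_add]; norm_num
        have h2 : Real.exp 0.99 ≤ Real.exp 1 := Real.exp_le_exp.2 (by norm_num)
        have h3 := Real.exp_one_lt_d9
        have h4 := Real.exp_pos 0.495
        nlinarith
      have hpow : (1 : ℝ) ≤ 2 ^ T := one_le_pow₀ (by norm_num)
      have hexp0 : (0 : ℝ) ≤ Real.exp (0.99 * T / 2) := (Real.exp_pos _).le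
      calc Real.exp (0.99 * ((T : ℕ) + 1 : ℕ) / 2)
          = Real.exp (0.99 * T / 2) * Real.exp 0.495 := h495
        _ ≤ (2 ^ T - 1) * 2 := by
            apply mul_le_mul ih' he (Real.exp_pos _).le (by linarith)
        _ ≤ 2 ^ (T + 1) - 1 := by rw [pow_succ]; nlinarith

/-- exponential stability lower bound for non-convex smooth losses with
constant step size `α = a/(0.99β)`. -/
theorem statement15 (n : ℕ) (hn : 0 < n) :
    ∃ (β a : ℝ), 0 < β ∧ 0 < a ∧
    ∃ (d : ℕ) (f : EuclideanSpace ℝ (Fin d) → EuclideanSpace ℝ (Fin d) × ℝ → ℝ)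
      (S S' : Fin n → EuclideanSpace ℝ (Fin d) × ℝ) (i : Fin n)
      (z : EuclideanSpace ℝ (Fin d) × ℝ),
      -- f is β-smooth in w for every data point, but not convex
      (∀ z u v, ‖gradient (fun w => f w z) u - gradient (fun w => f w z) v‖ ≤ β * ‖u - v‖) ∧
      (∃ z, ¬ ConvexOn ℝ Set.univ (fun w => f w z)) ∧
      -- S, S' are twin datasets differing exactly at index i
      (∀ j, j ≠ i → S j = S' j) ∧ S i ≠ S' i ∧
      -- SGD with constant step size α = a/(0.99β) from w₀ = 0, for every horizon T > n
      (∀ T : ℕ, n < T →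
        expA hn T (fun idx =>
            f (sgd f (fun _ => a / (0.99 * β)) (fun s => S (idx s)) 0 T) z -
              f (sgd f (fun _ => a / (0.99 * β)) (fun s => S' (idx s)) 0 T) z) ≥
          Real.exp (a * T / 2) / (n : ℝ) ^ 2 ∧
        -- in particular, uniform stability is at least exp(aT/2)/n²
        (∀ ε : ℝ,
          (∀ (Sa Sb : Fin n → EuclideanSpace ℝ (Fin d) × ℝ) (ia : Fin n),
              (∀ j, j ≠ ia → Sa j = Sb j) →
              ∀ za, expA hn T (fun idx =>
                |f (sgd f (fun _ => a / (0.99 * β)) (fun s => Sa (idx s)) 0 T) za -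
                  f (sgd f (fun _ => a / (0.99 * β)) (fun s => Sb (idx s)) 0 T) za|) ≤ ε) →
            Real.exp (a * T / 2) / (n : ℝ) ^ 2 ≤ ε)) := by
  classical
  set i : Fin n := ⟨0, hn⟩
  refine ⟨1, 0.99, one_pos, by norm_num, 1, St15.myf, St15.Sd n i, St15.Sd' n, i,
    (-St15.e, 0), ?_, ?_, ?_, ?_, ?_⟩
  · -- smoothness
    intro z u v
    rw [St15.gradient_myf, St15.gradient_myf, one_mul]
    by_cases h : z.2 = 1
    · rw [if_pos h, if_pos h]
      have hd : -u + z.1 - (-v + z.1) = -(u - v) := by abel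
      rw [hd, norm_neg]
    · rw [if_neg h, if_neg h]
      simp
  · -- non-convexity
    refine ⟨(0, 1), fun hc => ?_⟩
    have h2 := hc.2 (Set.mem_univ St15.e) (Set.mem_univ (-St15.e))
      (by norm_num : (0:ℝ) ≤ 1/2) (by norm_num : (0:ℝ) ≤ 1/2) (by norm_num)
    have hmid : (1/2 : ℝ) • St15.e + (1/2 : ℝ) • (-St15.e) = 0 := by module
    rw [hmid] at h2
    have hfe : St15.myf St15.e (0, 1) = -(1/2) := by
      simp [St15.myf, St15.norm_e]
    have hfne : St15.myf (-St15.e) (0, 1) = -(1/2) := by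
      simp [St15.myf, St15.norm_e]
    have hf0 : St15.myf 0 (0, 1) = 0 := by simp [St15.myf]
    simp only [hf0, hfe, hfne, smul_eq_mul] at h2
    norm_num at h2
  · -- twins agree off i
    intro j hj
    simp [St15.Sd, St15.Sd', hj]
  · -- differ at i
    intro h
    have he0 : St15.e = 0 := by simpa [St15.Sd, St15.Sd'] using h
    exact St15.e_ne_zero he0
  · intro T hT
    have hfun : (fun _ : ℕ => (0.99 : ℝ) / (0.99 * 1)) = fun _ : ℕ => (1:ℝ) := by
      funext; norm_num
    have hT1 : 1 ≤ T := by omega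
    have hT2 : 2 ≤ T := by omega
    have hn1 : (1 : ℝ) ≤ (n : ℝ) := by exact_mod_cast hn
    have hn0 : (0 : ℝ) < (n : ℝ) := by positivity
    have hvalc : ∀ c : ℝ, St15.myf ((-c) • St15.e) (-St15.e, 0) = c := by
      intro c
      have hinner : ⟪-St15.e, (-c) • St15.e⟫ = c := by
        rw [real_inner_smul_right, inner_neg_left, real_inner_self_eq_norm_sq, St15.norm_e]
        ring
      simp only [St15.myf]
      rw [hinner]
      norm_num
    have hg : ∀ idx : ℕ → Fin n,
        St15.myf (sgd St15.myf (fun _ => (1:ℝ)) (fun s => St15.Sd n i (idx s)) 0 T)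
            (-St15.e, 0) -
          St15.myf (sgd St15.myf (fun _ => (1:ℝ)) (fun s => St15.Sd' n (idx s)) 0 T)
            (-St15.e, 0) = St15.cnt i idx T := by
      intro idx
      rw [St15.sgd_Sd, St15.sgd_Sd', hvalc]
      simp [St15.myf]
    have hsum : ∑ ω : Fin T → Fin n, St15.cnt i (extSeq hn ω) T
        = (n : ℝ) ^ (T - 1) * (2 ^ T - 1) := by
      have hcc : ∀ ω : Fin T → Fin n, St15.cnt i (extSeq hn ω) T =
          ∑ t ∈ range T, (2:ℝ) ^ (T - 1 - t) *
            (if extSeq hn ω (t + 1) = i then 1 else 0) :=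
        fun ω => St15.cnt_closed i (extSeq hn ω) T
      simp only [hcc]
      rw [Finset.sum_comm]
      have hterm : ∀ t ∈ range T,
          (∑ ω : Fin T → Fin n, (2:ℝ) ^ (T - 1 - t) *
            (if extSeq hn ω (t + 1) = i then 1 else 0))
          = (n : ℝ) ^ (T - 1) * 2 ^ (T - 1 - t) := by
        intro t ht
        rw [mem_range] at ht
        have hk : ∀ ω : Fin T → Fin n, extSeq hn ω (t + 1) = ω ⟨t, ht⟩ := by
          intro ω
          rw [extSeq, dif_pos ⟨Nat.succ_pos t, by omega⟩]
          congr 1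
        simp only [hk]
        rw [← mul_sum, St15.sum_eval ⟨t, ht⟩ (fun x => if x = i then (1:ℝ) else 0)]
        rw [Finset.sum_ite_eq' univ i (fun _ => (1:ℝ))]
        simp [mul_comm]
      rw [Finset.sum_congr rfl hterm, ← mul_sum]
      congr 1
      rw [show (∑ t ∈ range T, (2:ℝ) ^ (T - 1 - t)) = ∑ t ∈ range T, (2:ℝ) ^ t from
        Finset.sum_range_reflect (fun s => (2:ℝ) ^ s) T, geom_sum_eq (by norm_num)]
      norm_num
    have hpowT : (n : ℝ) ^ T = (n : ℝ) ^ (T - 1) * n := by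
      rw [← pow_succ]
      congr 1
      omega
    have hgeom1 : (1 : ℝ) ≤ 2 ^ T := one_le_pow₀ (by norm_num)
    have hEA : expA hn T (fun idx => St15.cnt i idx T) = (2 ^ T - 1) / n := by
      rw [expA, hsum, hpowT, mul_div_mul_left _ _ (by positivity)]
    have hmain : expA hn T (fun idx => St15.cnt i idx T)
        ≥ Real.exp (0.99 * T / 2) / (n : ℝ) ^ 2 := by
      rw [hEA, ge_iff_le, div_le_div_iff₀ (by positivity) hn0]
      have hb := exp_bound T hT2
      nlinarith [Real.exp_pos (0.99 * T / 2), sq_nonneg ((n:ℝ) - 1)]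
    constructor
    · simp only [hfun, hg]
      exact hmain
    · intro ε hε
      have h1 := hε (St15.Sd n i) (St15.Sd' n) i
        (fun j hj => by simp [St15.Sd, St15.Sd', hj]) (-St15.e, 0)
      simp only [hfun, hg] at h1
      refine le_trans (le_trans hmain ?_) h1
      rw [expA, expA]
      have hc : (0:ℝ) < (n:ℝ) ^ T := by positivity
      rw [div_le_div_iff₀ hc hc]
      exact mul_le_mul_of_nonneg_right
        (Finset.sum_le_sum (fun ω _ => le_abs_self _)) hc.le
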